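/- arXiv:2210.05959 — 4 statements merged into one kernel-verified Lean document; each statement's English description precedes it below -/
import Mathlib

section
/- Let ReLU(t) = max(t, 0), let Â be a real n×n matrix, E a real n×h matrix, C a real n×h' matrix, and let W be a real h×h' matrix such that every entry of Â E W is nonzero. Define r(W') = ∑_{i,j} C[i,j] · (ReLU•(Â E W'))[i,j]. Then there exists a neighborhood of W on which r agrees with an affine function of W'; in particular, r is twice differentiable at W and its second (Fréchet) derivative at W is zero. -/
open Matrix

attribute [local instance] Matrix.normedAddCommGroup Matrix.normedSpace

/-- The rectified linear unit `ReLU(t) = max(t, 0)`. -/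
noncomputable def relu (t : ℝ) : ℝ := max t 0

/-- **Case 1 of Theorem 1 of the paper.** If every entry of `Â E W` is
nonzero and `r(W') = ∑_{i,j} C[i,j] • (ReLU • (Â E W'))[i,j]`, then `r` agrees with an
affine function on a neighborhood of `W`; in particular `r` is twice differentiable at
`W` and its second Fréchet derivative at `W` vanishes. -/
theorem gcn_relu_layer_second_deriv_same_layer_eq_zero
    (n h h' : ℕ)
    (Ahat : Matrix (Fin n) (Fin n) ℝ) (E : Matrix (Fin n) (Fin h) ℝ)
    (C : Matrix (Fin n) (Fin h') ℝ) (W : Matrix (Fin h) (Fin h') ℝ)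
    (hW : ∀ i j, (Ahat * E * W) i j ≠ 0)
    (r : Matrix (Fin h) (Fin h') ℝ → ℝ)
    (hr : ∀ W', r W' = ∑ i, ∑ j, C i j * ((Ahat * E * W').map relu) i j) :
    (∃ (L : Matrix (Fin h) (Fin h') ℝ →L[ℝ] ℝ) (c : ℝ),
        ∀ᶠ W' in nhds W, r W' = L W' + c) ∧
      DifferentiableAt ℝ r W ∧
      DifferentiableAt ℝ (fderiv ℝ r) W ∧
      fderiv ℝ (fderiv ℝ r) W = 0 := by
  classical
  set B := Ahat * E with hB
  let φ : Matrix (Fin h) (Fin h') ℝ →ₗ[ℝ] ℝ :=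
  { toFun := fun W' => ∑ i, ∑ j, (if 0 < (B * W) i j then C i j else 0) * (B * W') i j
    map_add' := by
      intro x y
      simp [Matrix.mul_add, Matrix.add_apply, mul_add, Finset.sum_add_distrib]
    map_smul' := by
      intro c x
      simp only [Matrix.mul_smul, Matrix.smul_apply, smul_eq_mul, RingHom.id_apply,
        Finset.mul_sum]
      refine Finset.sum_congr rfl fun i _ => Finset.sum_congr rfl fun j _ => by ring }
  let L : Matrix (Fin h) (Fin h') ℝ →L[ℝ] ℝ := LinearMap.toContinuousLinearMap φ
  have hc : ∀ i j, Continuous fun W' : Matrix (Fin h) (Fin h') ℝ => (B * W') i j := by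
    intro i j
    have : Continuous fun W' : Matrix (Fin h) (Fin h') ℝ => B * W' :=
      continuous_const.matrix_mul continuous_id
    exact this.matrix_elem i j
  have h1 : ∀ᶠ W' in nhds W, ∀ i j,
      relu ((B * W') i j) = (if 0 < (B * W) i j then (B * W') i j else 0) := by
    rw [Filter.eventually_all]
    intro i
    rw [Filter.eventually_all]
    intro j
    rcases lt_or_gt_of_ne (hW i j) with hneg | hpos
    · filter_upwards [(hc i j).continuousAt.eventually (eventually_lt_nhds hneg)] with W' hW'
      rw [if_neg (not_lt.mpr hneg.le)]
      exact max_eq_right hW'.le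
    · filter_upwards [(hc i j).continuousAt.eventually (eventually_gt_nhds hpos)] with W' hW'
      rw [if_pos hpos]
      exact max_eq_left hW'.le
  have hev : ∀ᶠ W' in nhds W, r W' = L W' := by
    filter_upwards [h1] with W' hW'
    rw [hr W']
    show _ = ∑ i, ∑ j, (if 0 < (B * W) i j then C i j else 0) * (B * W') i j
    refine Finset.sum_congr rfl fun i _ => Finset.sum_congr rfl fun j _ => ?_
    rw [Matrix.map_apply, hW' i j]
    split <;> simp
  have heq : r =ᶠ[nhds W] fun W' => L W' := hev
  have hdiff : DifferentiableAt ℝ r W :=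
    heq.differentiableAt_iff.mpr L.differentiableAt
  have hfd : fderiv ℝ r =ᶠ[nhds W] fun _ => L := by
    have := heq.fderiv (𝕜 := ℝ)
    refine this.trans ?_
    filter_upwards with W'
    exact L.fderiv
  refine ⟨⟨L, 0, by filter_upwards [hev] with W' hW'; simp [hW']⟩, hdiff, ?_, ?_⟩
  · exact (differentiableAt_const L).congr_of_eventuallyEq hfd
  · rw [hfd.fderiv_eq, fderiv_fun_const]
    rfl
end

section
/- Let ReLU(t) = max(t, 0) and step(t) = 1 if t > 0 and 0 if t < 0. Let Â be a real n×n matrix, E a real n×h matrix, W a real h×h' matrix, and G a real n×h' matrix, and assume every entry of Â E W is nonzero. Define R(E', W') = ∑_{i,j} G[i,j] · (ReLU•(Â E' W'))[i,j] and S = step•(Â E W). Then the mixed second partial derivative ∂²R/∂E[a,b] ∂W[c,d] at (E, W) equals δ_{b,c} · [Â^T (G ⊙ S)][a,d], where δ is the Kronecker delta. -/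
open Matrix Filter

/-- The step function: `1` for `t > 0`, and `0` otherwise (in particular `0` for `t < 0`). -/
noncomputable def step (t : ℝ) : ℝ := if 0 < t then 1 else 0

lemma relu_hasDerivAt {x : ℝ} (hx : x ≠ 0) : HasDerivAt relu (step x) x := by
  rcases hx.lt_or_gt with hlt | hlt
  · have he : relu =ᶠ[nhds x] fun _ => (0:ℝ) := by
      filter_upwards [Iio_mem_nhds hlt] with y hy
      simp [relu, max_eq_right (Set.mem_Iio.mp hy).le]
    have h0 : HasDerivAt (fun _ : ℝ => (0:ℝ)) 0 x := hasDerivAt_const _ _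
    have := h0.congr_of_eventuallyEq he
    simpa [step, not_lt.mpr hlt.le] using this
  · have he : relu =ᶠ[nhds x] id := by
      filter_upwards [Ioi_mem_nhds hlt] with y hy
      simp [relu, max_eq_left (Set.mem_Ioi.mp hy).le]
    have := (hasDerivAt_id x).congr_of_eventuallyEq he
    simpa [step, hlt] using this

lemma inner_deriv {n h' : ℕ} (G M N : Matrix (Fin n) (Fin h') ℝ)
    (hM : ∀ i j, M i j ≠ 0) :
    deriv (fun t : ℝ => ∑ i, ∑ j, G i j * relu (M i j + t * N i j)) 0
      = ∑ i, ∑ j, G i j * (step (M i j) * N i j) := by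
  have H : HasDerivAt (fun t : ℝ => ∑ i, ∑ j, G i j * relu (M i j + t * N i j))
      (∑ i, ∑ j, G i j * (step (M i j) * N i j)) 0 := by
    apply HasDerivAt.fun_sum
    intro i _
    apply HasDerivAt.fun_sum
    intro j _
    have hlin : HasDerivAt (fun t : ℝ => M i j + t * N i j) (N i j) 0 := by
      simpa using ((hasDerivAt_id (0:ℝ)).mul_const (N i j)).const_add (M i j)
    have := (relu_hasDerivAt (x := M i j + 0 * N i j) (by simpa using hM i j)).comp 0 hlin
    simpa using this.const_mul (G i j)
  exact H.deriv

lemma final_sum (n h h' : ℕ) (A : Matrix (Fin n) (Fin n) ℝ)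
    (G M : Matrix (Fin n) (Fin h') ℝ)
    (a : Fin n) (b : Fin h) (c : Fin h) (d : Fin h') :
    ∑ i, ∑ j, G i j * (step (M i j) *
        ((A * Matrix.single a b (1:ℝ) * Matrix.single c d (1:ℝ)) i j))
      = (if b = c then 1 else 0) * (Aᵀ * Matrix.hadamard G (M.map step)) a d := by
  have hQ : ∀ (i : Fin n) (j : Fin h'),
      (A * Matrix.single a b (1:ℝ) * Matrix.single c d (1:ℝ)) i j
        = (if b = c then 1 else 0) * (A i a * if j = d then 1 else 0) := by
    intro i j
    simp [Matrix.mul_apply, Matrix.single, ite_and, Finset.sum_ite_eq,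
      Finset.mul_sum, Finset.sum_mul, eq_comm]
  simp only [hQ, Matrix.mul_apply, Matrix.transpose_apply, Matrix.hadamard_apply,
    Matrix.map_apply, Finset.mul_sum]
  rw [Finset.sum_comm]
  by_cases hbc : b = c
  · simp [hbc]
    exact Finset.sum_congr rfl fun i _ => by ring
  · simp [hbc]

/-- **inner formula of Case 4 of Theorem 1 of the paper.** For the
linear readout `R(E', W') = ∑_{i,j} G[i,j] • (ReLU•(Â E' W'))[i,j]` of a ReLU GCN
layer whose preactivation `Â E W` has no zero entry, the mixed second partial
derivative `∂²R / ∂E[a,b] ∂W[c,d]` at `(E, W)` equals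
`δ_{b,c} • [Âᵀ (G ⊙ S)][a,d]` with `S = step•(Â E W)`. -/
theorem gcn_mixed_hessian_embedding_weight
    (n h h' : ℕ)
    (Ahat : Matrix (Fin n) (Fin n) ℝ) (E : Matrix (Fin n) (Fin h) ℝ)
    (W : Matrix (Fin h) (Fin h') ℝ) (G : Matrix (Fin n) (Fin h') ℝ)
    (hne : ∀ i j, (Ahat * E * W) i j ≠ 0)
    (a : Fin n) (b : Fin h) (c : Fin h) (d : Fin h') :
    deriv (fun s : ℝ =>
        deriv (fun t : ℝ =>
            ∑ i, ∑ j, G i j *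
              ((Ahat * (E + s • Matrix.single a b (1 : ℝ)) *
                  (W + t • Matrix.single c d (1 : ℝ))).map relu) i j) 0) 0
      = (if b = c then 1 else 0) *
          (Ahatᵀ * Matrix.hadamard G ((Ahat * E * W).map step)) a d := by
  set B := Matrix.single a b (1 : ℝ) with hB
  set C := Matrix.single c d (1 : ℝ) with hC
  have hMs : ∀ (s : ℝ) (i : Fin n) (j : Fin h'),
      (Ahat * (E + s • B) * W) i j = (Ahat*E*W) i j + s * (Ahat*B*W) i j := by
    intro s i j
    simp [Matrix.mul_add, Matrix.add_mul, Matrix.mul_smul, Matrix.smul_mul,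
      Matrix.add_apply, Matrix.smul_apply, smul_eq_mul]
  have hNs : ∀ (s : ℝ) (i : Fin n) (j : Fin h'),
      (Ahat * (E + s • B) * C) i j = (Ahat*E*C) i j + s * (Ahat*B*C) i j := by
    intro s i j
    simp [Matrix.mul_add, Matrix.add_mul, Matrix.mul_smul, Matrix.smul_mul,
      Matrix.add_apply, Matrix.smul_apply, smul_eq_mul]
  have key : ∀ᶠ s : ℝ in nhds 0, ∀ i j,
      (Ahat * (E + s • B) * W) i j ≠ 0 ∧
      step ((Ahat * (E + s • B) * W) i j) = step ((Ahat * E * W) i j) := by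
    rw [eventually_all]; intro i
    rw [eventually_all]; intro j
    have hc : Filter.Tendsto (fun s : ℝ => (Ahat * (E + s • B) * W) i j)
        (nhds 0) (nhds ((Ahat*E*W) i j)) := by
      have hcont : Continuous (fun s : ℝ => (Ahat*E*W) i j + s * (Ahat*B*W) i j) := by
        fun_prop
      have h0 := hcont.tendsto 0
      simp only [zero_mul, add_zero] at h0
      refine h0.congr fun s => ?_
      rw [hMs s i j]
    rcases (hne i j).lt_or_gt with hlt | hlt
    · filter_upwards [hc (Iio_mem_nhds hlt)] with s hs
      have hs' : (Ahat * (E + s • B) * W) i j < 0 := hs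
      exact ⟨ne_of_lt hs', by simp [step, not_lt.mpr hs'.le, not_lt.mpr hlt.le]⟩
    · filter_upwards [hc (Ioi_mem_nhds hlt)] with s hs
      have hs' : 0 < (Ahat * (E + s • B) * W) i j := hs
      exact ⟨ne_of_gt hs', by simp [step, hs', hlt]⟩
  have geq : (fun s : ℝ =>
        deriv (fun t : ℝ =>
            ∑ i, ∑ j, G i j * ((Ahat * (E + s • B) * (W + t • C)).map relu) i j) 0)
      =ᶠ[nhds 0] (fun s : ℝ => ∑ i, ∑ j, G i j *
          (step ((Ahat*E*W) i j) * ((Ahat*E*C) i j + s * (Ahat*B*C) i j))) := by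
    filter_upwards [key] with s hs
    have hfun : (fun t : ℝ =>
        ∑ i, ∑ j, G i j * ((Ahat * (E + s • B) * (W + t • C)).map relu) i j)
        = fun t : ℝ => ∑ i, ∑ j, G i j *
            relu ((Ahat * (E + s • B) * W) i j + t * (Ahat * (E + s • B) * C) i j) := by
      funext t
      refine Finset.sum_congr rfl fun i _ => Finset.sum_congr rfl fun j _ => ?_
      congr 1
      simp [Matrix.map_apply, Matrix.mul_add, Matrix.mul_smul,
        Matrix.add_apply, Matrix.smul_apply, smul_eq_mul]
    rw [hfun, inner_deriv _ _ _ (fun i j => (hs i j).1)]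
    refine Finset.sum_congr rfl fun i _ => Finset.sum_congr rfl fun j _ => ?_
    rw [(hs i j).2, hNs s i j]
  rw [geq.deriv_eq]
  have H : HasDerivAt (fun s : ℝ => ∑ i, ∑ j, G i j *
        (step ((Ahat*E*W) i j) * ((Ahat*E*C) i j + s * (Ahat*B*C) i j)))
      (∑ i, ∑ j, G i j * (step ((Ahat*E*W) i j) * (Ahat*B*C) i j)) 0 := by
    apply HasDerivAt.fun_sum; intro i _
    apply HasDerivAt.fun_sum; intro j _
    have hlin : HasDerivAt (fun s : ℝ => (Ahat*E*C) i j + s * (Ahat*B*C) i j)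
        ((Ahat*B*C) i j) 0 := by
      simpa using ((hasDerivAt_id (0:ℝ)).mul_const ((Ahat*B*C) i j)).const_add ((Ahat*E*C) i j)
    simpa [mul_assoc] using (hlin.const_mul (step ((Ahat*E*W) i j))).const_mul (G i j)
  rw [H.deriv, hB, hC]
  exact final_sum n h h' Ahat G (Ahat*E*W) a b c d
end

section
/- Let ReLU(t) = max(t, 0) and step(t) = 1 if t > 0 and 0 if t < 0. Let Â be a real n×n matrix, E₀ a real n×h₀ matrix, W₁ a real h₀×h₁ matrix, W₂ a real h₁×h₂ matrix, and G a real n×h₂ matrix. Set E₁ = ReLU•(Â E₀ W₁), S₁ = step•(Â E₀ W₁), S₂ = step•(Â E₁ W₂), and define R(W₁', W₂') = ∑_{i,j} G[i,j] · (ReLU•(Â (ReLU•(Â E₀ W₁')) W₂'))[i,j]. Assume every entry of Â E₀ W₁ and every entry of Â E₁ W₂ is nonzero. Then the mixed second partial derivative ∂²R/∂W₁[a,b] ∂W₂[c,d] at (W₁, W₂) equals [(Â E₀)^T (M_{cd} ⊙ S₁)][a,b], where M_{cd} is the n×h₁ matrix with entries M_{cd}[x,y] = δ_{y,c} · [Â^T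 (G ⊙ S₂)][x,d]. -/
open Matrix
open Filter

lemma continuous_relu : Continuous relu := continuous_id.max continuous_const

lemma sign_stable {f : ℝ → ℝ} (hf : ContinuousAt f 0) (hne : f 0 ≠ 0) :
    ∀ᶠ s in nhds (0:ℝ), f s ≠ 0 ∧ step (f s) = step (f 0)
      ∧ relu (f s) = step (f 0) * f s := by
  rcases hne.lt_or_gt with h | h
  · filter_upwards [hf.eventually (eventually_lt_nhds h)] with s hs
    exact ⟨ne_of_lt hs, by simp [step, not_lt.2 hs.le, not_lt.2 h.le],
      by simp [relu, step, not_lt.2 h.le, max_eq_right hs.le]⟩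
  · filter_upwards [hf.eventually (eventually_gt_nhds h)] with s hs
    exact ⟨ne_of_gt hs, by simp [step, hs, h],
      by simp [relu, step, h, max_eq_left hs.le]⟩

lemma deriv_affine (u v x : ℝ) : deriv (fun t : ℝ => u + t * v) x = v := by
  have h : HasDerivAt (fun t : ℝ => u + t * v) v x := by
    simpa using ((hasDerivAt_id x).mul_const v).const_add u
  exact h.deriv

lemma sum_affine {ι κ : Type*} [Fintype ι] [Fintype κ] (gm am bm : ι → κ → ℝ) :
    (fun t : ℝ => ∑ i, ∑ j, gm i j * (am i j + t * bm i j)) =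
      fun t => (∑ i, ∑ j, gm i j * am i j) + t * ∑ i, ∑ j, gm i j * bm i j := by
  funext t
  rw [Finset.mul_sum, ← Finset.sum_add_distrib]
  refine Finset.sum_congr rfl fun i _ => ?_
  rw [Finset.mul_sum, ← Finset.sum_add_distrib]
  exact Finset.sum_congr rfl fun j _ => by ring

/-- **Case 4 of Theorem 1, Eq. 16 of the paper.** For the two-layer
ReLU GCN readout `R(W₁', W₂') = ∑_{i,j} G[i,j] • (ReLU•(Â (ReLU•(Â E₀ W₁')) W₂'))[i,j]`
with no preactivation entry at the ReLU kink, the mixed second partial derivative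
`∂²R / ∂W₁[a,b] ∂W₂[c,d]` at `(W₁, W₂)` equals `[(Â E₀)ᵀ (M_{cd} ⊙ S₁)][a,b]`, where
`M_{cd}[x,y] = δ_{y,c} • [Âᵀ (G ⊙ S₂)][x,d]`, `S₁ = step•(Â E₀ W₁)`,
`S₂ = step•(Â E₁ W₂)`, `E₁ = ReLU•(Â E₀ W₁)`. -/
theorem gcn_mixed_hessian_weight_next_weight
    (n h₀ h₁ h₂ : ℕ)
    (Ahat : Matrix (Fin n) (Fin n) ℝ) (E₀ : Matrix (Fin n) (Fin h₀) ℝ)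
    (W₁ : Matrix (Fin h₀) (Fin h₁) ℝ) (W₂ : Matrix (Fin h₁) (Fin h₂) ℝ)
    (G : Matrix (Fin n) (Fin h₂) ℝ)
    (h₁ne : ∀ i j, (Ahat * E₀ * W₁) i j ≠ 0)
    (h₂ne : ∀ i j, (Ahat * ((Ahat * E₀ * W₁).map relu) * W₂) i j ≠ 0)
    (a : Fin h₀) (b : Fin h₁) (c : Fin h₁) (d : Fin h₂) :
    deriv (fun s : ℝ =>
        deriv (fun t : ℝ =>
            ∑ i, ∑ j, G i j *
              ((Ahat *
                  ((Ahat * E₀ * (W₁ + s • Matrix.single a b (1 : ℝ))).map relu) *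
                  (W₂ + t • Matrix.single c d (1 : ℝ))).map relu) i j) 0) 0
      = ((Ahat * E₀)ᵀ *
          Matrix.hadamard
            (Matrix.of (fun x y =>
              (if y = c then (1 : ℝ) else 0) *
                (Ahatᵀ *
                  Matrix.hadamard G
                    ((Ahat * ((Ahat * E₀ * W₁).map relu) * W₂).map step)) x d))
            ((Ahat * E₀ * W₁).map step)) a b := by
  classical
  set B := Matrix.single a b (1:ℝ) with hBdef
  set C := Matrix.single c d (1:ℝ) with hCdef
  set P0 : Matrix (Fin n) (Fin h₁) ℝ := Ahat * E₀ * W₁ with hP0def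
  set D : Matrix (Fin n) (Fin h₁) ℝ := Ahat * E₀ * B with hDdef
  set S1 := P0.map step with hS1def
  set S2 := (Ahat * P0.map relu * W₂).map step with hS2def
  have hPs : ∀ s : ℝ, Ahat * E₀ * (W₁ + s • B) = P0 + s • D := fun s => by
    rw [Matrix.mul_add, Matrix.mul_smul]
  have hP00 : P0 + (0:ℝ) • D = P0 := by simp
  -- continuity of entries of Ahat * relu(P s) * W, in s
  have hcont : ∀ {k : ℕ} (W : Matrix (Fin h₁) (Fin k) ℝ) (i : Fin n) (j : Fin k),
      Continuous fun s : ℝ => (Ahat * ((P0 + s • D).map relu) * W) i j := by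
    intro k W i j
    simp only [Matrix.mul_apply, Matrix.map_apply, Matrix.add_apply, Matrix.smul_apply,
      smul_eq_mul]
    refine continuous_finset_sum _ fun y _ => Continuous.mul ?_ continuous_const
    refine continuous_finset_sum _ fun x _ => continuous_const.mul ?_
    exact continuous_relu.comp (continuous_const.add (continuous_id.mul continuous_const))
  -- eventual facts in s
  have hU : ∀ᶠ s in nhds (0:ℝ),
      ((P0 + s • D).map relu = S1 ⊙ (P0 + s • D)) ∧
      (∀ i j, (Ahat * ((P0 + s • D).map relu) * W₂) i j ≠ 0 ∧
        step ((Ahat * ((P0 + s • D).map relu) * W₂) i j) = S2 i j) := by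
    have hA : ∀ᶠ s in nhds (0:ℝ), ∀ i j,
        relu ((P0 + s • D) i j) = S1 i j * ((P0 + s • D) i j) := by
      rw [eventually_all]; intro i; rw [eventually_all]; intro j
      have hf : ContinuousAt (fun s : ℝ => (P0 + s • D) i j) 0 := by
        simp only [Matrix.add_apply, Matrix.smul_apply, smul_eq_mul]
        exact (continuous_const.add (continuous_id.mul continuous_const)).continuousAt
      filter_upwards [sign_stable hf (by simpa [hP00] using h₁ne i j)] with s hs
      have := hs.2.2
      rw [hP00] at this
      exact this
    have hBev : ∀ᶠ s in nhds (0:ℝ), ∀ i j,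
        (Ahat * ((P0 + s • D).map relu) * W₂) i j ≠ 0 ∧
        step ((Ahat * ((P0 + s • D).map relu) * W₂) i j) = S2 i j := by
      rw [eventually_all]; intro i; rw [eventually_all]; intro j
      have hf := (hcont W₂ i j).continuousAt (x := (0:ℝ))
      filter_upwards [sign_stable hf (by rw [hP00]; exact h₂ne i j)] with s hs
      refine ⟨hs.1, ?_⟩
      rw [hs.2.1, hP00]
      rfl
    filter_upwards [hA, hBev] with s hs1 hs2
    exact ⟨Matrix.ext fun i j => by simpa [Matrix.map_apply, Matrix.hadamard_apply] using hs1 i j,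
      hs2⟩
  -- inner derivative
  have key : (fun s : ℝ => deriv (fun t : ℝ =>
      ∑ i, ∑ j, G i j *
        ((Ahat * ((Ahat * E₀ * (W₁ + s • B)).map relu) * (W₂ + t • C)).map relu) i j) 0)
      =ᶠ[nhds (0:ℝ)] fun s =>
        ∑ i, ∑ j, (G i j * S2 i j) * ((Ahat * ((P0 + s • D).map relu) * C) i j) := by
    filter_upwards [hU] with s hs
    set M := (P0 + s • D).map relu with hMdef
    have hafft : ∀ t : ℝ, Ahat * M * (W₂ + t • C)
        = Ahat * M * W₂ + t • (Ahat * M * C) := fun t => by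
      rw [Matrix.mul_add, Matrix.mul_smul]
    have ht : ∀ᶠ t in nhds (0:ℝ), ∀ i j,
        relu ((Ahat * M * W₂) i j + t * (Ahat * M * C) i j)
          = S2 i j * ((Ahat * M * W₂) i j + t * (Ahat * M * C) i j) := by
      rw [eventually_all]; intro i; rw [eventually_all]; intro j
      have hf : ContinuousAt
          (fun t : ℝ => (Ahat * M * W₂) i j + t * (Ahat * M * C) i j) 0 :=
        (continuous_const.add (continuous_id.mul continuous_const)).continuousAt
      filter_upwards [sign_stable hf (by simpa using (hs.2 i j).1)] with t htt
      have := htt.2.2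
      rw [zero_mul, add_zero] at this
      rw [this, (hs.2 i j).2]
    have hev : (fun t : ℝ => ∑ i, ∑ j, G i j *
        ((Ahat * ((Ahat * E₀ * (W₁ + s • B)).map relu) * (W₂ + t • C)).map relu) i j)
        =ᶠ[nhds (0:ℝ)] fun t => ∑ i, ∑ j, (G i j * S2 i j) *
          ((Ahat * M * W₂) i j + t * (Ahat * M * C) i j) := by
      filter_upwards [ht] with t htt
      refine Finset.sum_congr rfl fun i _ => Finset.sum_congr rfl fun j _ => ?_
      rw [hPs s, ← hMdef, Matrix.map_apply, hafft t]
      simp only [Matrix.add_apply, Matrix.smul_apply, smul_eq_mul]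
      rw [htt i j]
      ring
    rw [hev.deriv_eq, sum_affine (fun i j => G i j * S2 i j) (fun i j => (Ahat * M * W₂) i j)
      (fun i j => (Ahat * M * C) i j), deriv_affine]
  rw [key.deriv_eq]
  -- outer derivative
  have gaff : (fun s : ℝ =>
      ∑ i, ∑ j, (G i j * S2 i j) * ((Ahat * ((P0 + s • D).map relu) * C) i j))
      =ᶠ[nhds (0:ℝ)] fun s =>
        (∑ i, ∑ j, (G i j * S2 i j) * ((Ahat * (S1 ⊙ P0) * C) i j)) +
          s * ∑ i, ∑ j, (G i j * S2 i j) * ((Ahat * (S1 ⊙ D) * C) i j) := by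
    filter_upwards [hU] with s hs
    have : (P0 + s • D).map relu = S1 ⊙ P0 + s • (S1 ⊙ D) := by
      rw [hs.1, Matrix.hadamard_add, Matrix.hadamard_smul]
    rw [this, Matrix.mul_add, Matrix.mul_smul, Matrix.add_mul, Matrix.smul_mul]
    have := congrFun (sum_affine (fun i j => G i j * S2 i j)
      (fun i j => (Ahat * (S1 ⊙ P0) * C) i j)
      (fun i j => (Ahat * (S1 ⊙ D) * C) i j)) s
    rw [← this]
    refine Finset.sum_congr rfl fun i _ => Finset.sum_congr rfl fun j _ => ?_
    simp [Matrix.add_apply, Matrix.smul_apply, smul_eq_mul]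
  rw [gaff.deriv_eq, deriv_affine]
  -- final sum identity
  simp only [hDdef, hBdef, hCdef, Matrix.mul_apply, Matrix.hadamard_apply, Matrix.transpose_apply,
    Matrix.of_apply, Matrix.map_apply, Matrix.single, ite_mul, mul_ite, mul_zero, zero_mul,
    mul_one, ite_and, Finset.sum_ite_eq, Finset.sum_ite_eq', Finset.mem_univ, if_true]
  by_cases hbc : b = c
  · subst hbc
    simp only [if_pos rfl, one_mul, Finset.mul_sum, Finset.sum_mul]
    rw [Finset.sum_comm]
    refine Finset.sum_congr rfl fun y _ => Finset.sum_congr rfl fun x _ => ?_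
    simp only [if_true, Finset.mul_sum]
    exact Finset.sum_congr rfl fun z _ => by ring
  · simp [hbc]
end

section
/- Let F, r : ℝ^p → ℝ and suppose: (i) the gradient map ∇F : ℝ^p → ℝ^p is differentiable at a point θ₀ with (symmetric) derivative matrix H = ∇²F(θ₀); (ii) the gradient map ∇r : ℝ^p → ℝ^p is continuous at θ₀; (iii) θ : ℝ → ℝ^p is differentiable at 0 with θ(0) = θ₀, and there is a neighborhood of 0 on which the stationarity condition ∇F(θ(ε)) + ε ∇r(θ(ε)) = 0 holds for all ε. If H is invertible, then θ'(0) = −H^{-1} ∇r(θ₀). -/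
open scoped RealInnerProductSpace

/-- **classical influence-function identity, Eq. 5 of the paper.**
Suppose the gradient map `∇F` is differentiable at `θ₀` with invertible (and
symmetric) derivative `H = ∇²F(θ₀)`, `∇r` is continuous at `θ₀`, `θ` is
differentiable at `0` with `θ 0 = θ₀`, and the stationarity condition
`∇F(θ(ε)) + ε • ∇r(θ(ε)) = 0` holds for all `ε` in a neighborhood of `0`.
Then `θ'(0) = −H⁻¹ (∇r(θ₀))`.  Invertibility of `H` is encoded by presenting it
as a continuous linear equivalence. -/
theorem influence_function_identity
    (p : ℕ) (F r : EuclideanSpace ℝ (Fin p) → ℝ)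
    (θ₀ : EuclideanSpace ℝ (Fin p))
    (H : EuclideanSpace ℝ (Fin p) ≃L[ℝ] EuclideanSpace ℝ (Fin p))
    (hF : HasFDerivAt (gradient F)
      (H : EuclideanSpace ℝ (Fin p) →L[ℝ] EuclideanSpace ℝ (Fin p)) θ₀)
    (hsymm : ∀ x y : EuclideanSpace ℝ (Fin p), ⟪H x, y⟫ = ⟪x, H y⟫)
    (hr : ContinuousAt (gradient r) θ₀)
    (θ : ℝ → EuclideanSpace ℝ (Fin p))
    (hθ : DifferentiableAt ℝ θ 0) (hθ₀ : θ 0 = θ₀)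
    (hstat : ∀ᶠ ε in nhds (0 : ℝ),
      gradient F (θ ε) + ε • gradient r (θ ε) = 0) :
    deriv θ 0 = -(H.symm (gradient r θ₀)) := by
  set g : ℝ → EuclideanSpace ℝ (Fin p) := fun ε => gradient r (θ ε) with hg
  have hgc : ContinuousAt g 0 := by
    have : ContinuousAt (gradient r) (θ 0) := by rw [hθ₀]; exact hr
    exact this.comp hθ.continuousAt
  have hg0 : g 0 = gradient r θ₀ := by simp [hg, hθ₀]
  -- derivative of ε ↦ ε • g ε at 0 is g 0
  have h2 : HasDerivAt (fun ε : ℝ => ε • g ε) (g 0) 0 := by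
    rw [hasDerivAt_iff_tendsto_slope]
    have heq : ∀ ε ∈ ({(0:ℝ)}ᶜ : Set ℝ), g ε = slope (fun ε : ℝ => ε • g ε) 0 ε := by
      intro ε hε
      have hε' : ε ≠ 0 := hε
      simp [slope_def_field, slope, vsub_eq_sub, smul_smul, inv_mul_cancel₀ hε']
    exact Filter.Tendsto.congr' (eventually_mem_nhdsWithin.mono heq)
      (hgc.tendsto.mono_left nhdsWithin_le_nhds)
  have h1 : HasDerivAt (fun ε => gradient F (θ ε)) (H (deriv θ 0)) 0 := by
    rw [← hθ₀] at hF
    exact hF.comp_hasDerivAt 0 hθ.hasDerivAt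
  have h3 : HasDerivAt (fun ε => gradient F (θ ε) + ε • g ε)
      (H (deriv θ 0) + g 0) 0 := h1.add h2
  have h4 : HasDerivAt (fun ε => gradient F (θ ε) + ε • g ε)
      (0 : EuclideanSpace ℝ (Fin p)) 0 := by
    have hc : HasDerivAt (fun _ : ℝ => (0 : EuclideanSpace ℝ (Fin p))) 0 0 :=
      hasDerivAt_const _ _
    exact hc.congr_of_eventuallyEq hstat
  have h5 : H (deriv θ 0) + g 0 = 0 := h3.unique h4
  have h6 : H (deriv θ 0) = -(g 0) := by
    rwa [add_eq_zero_iff_eq_neg] at h5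
  have := congrArg H.symm h6
  rw [H.symm_apply_apply] at this
  rw [this, hg0, map_neg]
end
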